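/- For any m×n matrix A over a field of rank r, there exists a unique m×n matrix R with exactly r nonzero entries, all equal to 1, at most one per row and at most one per column, such that for all 1 ≤ i ≤ m and 1 ≤ j ≤ n, the rank of the leading i×j submatrix of R equals the rank of the leading i×j submatrix of A. (R is called the rank profile matrix of A.) -/

import Mathlib

open Matrix

/-- The leading `i×j` submatrix of a matrix. -/
def leadSub {K : Type*} [Field K] {m n : ℕ} (A : Matrix (Fin m) (Fin n) K) {i j : ℕ}
    (hi : i ≤ m) (hj : j ≤ n) : Matrix (Fin i) (Fin j) K :=
  A.submatrix (Fin.castLE hi) (Fin.castLE hj)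

/-- An `r`-sub-permutation matrix: rank `r` with exactly `r` nonzero entries, all equal to 1. -/
def IsSubPerm {K : Type*} [Field K] {m n : ℕ} (r : ℕ) (R : Matrix (Fin m) (Fin n) K) : Prop :=
  (∀ i j, R i j = 0 ∨ R i j = 1) ∧
  {p : Fin m × Fin n | R p.1 p.2 ≠ 0}.ncard = r ∧
  R.rank = r

/-- `R` is the rank profile matrix of `A`: the rank(A)-sub-permutation matrix each of whose
leading submatrices has the same rank as the corresponding leading submatrix of `A`. -/
def IsRPM {K : Type*} [Field K] {m n : ℕ} (A R : Matrix (Fin m) (Fin n) K) : Prop :=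
  IsSubPerm A.rank R ∧
  ∀ (i j : ℕ) (hi : i ≤ m) (hj : j ≤ n),
    (leadSub R hi hj).rank = (leadSub A hi hj).rank

/-- `S` is the row rank profile of `A`: the lexicographically smallest set of
`rank A` indices of linearly independent rows of `A`. -/
def IsRowRP {K : Type*} [Field K] {m n : ℕ} (A : Matrix (Fin m) (Fin n) K)
    (S : Finset (Fin m)) : Prop :=
  S.card = A.rank ∧ LinearIndependent K (fun i : S => A i) ∧
  ∀ T : Finset (Fin m), T.card = A.rank → LinearIndependent K (fun i : T => A i) →
    S = T ∨ List.Lex (· < ·) (S.sort (· ≤ ·)) (T.sort (· ≤ ·))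

open Classical in
/-- Row support: the set of indices of nonzero rows. -/
noncomputable def rowSupp {K : Type*} [Field K] {m n : ℕ}
    (R : Matrix (Fin m) (Fin n) K) : Finset (Fin m) :=
  Finset.univ.filter fun i => ∃ j, R i j ≠ 0

/-- The m×n block matrix [[I_r, 0], [0, 0]]. -/
def Jb (K : Type*) [Field K] (m n r : ℕ) : Matrix (Fin m) (Fin n) K :=
  Matrix.of fun i j => if (i : ℕ) = (j : ℕ) ∧ (i : ℕ) < r then 1 else 0

/-- The pivoting matrix `Π_{P,Q} = P [[I_r,0],[0,0]] Q` of a PLUQ decomposition of rank r. -/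
noncomputable def PivMat (K : Type*) [Field K] {m n : ℕ}
    (σ : Equiv.Perm (Fin m)) (τ : Equiv.Perm (Fin n)) (r : ℕ) : Matrix (Fin m) (Fin n) K :=
  σ.permMatrix K * Jb K m n r * τ.permMatrix K

/-- A permutation of `Fin n` is `k`-monotonically increasing if its last `n-k`
values form a strictly increasing sequence. -/
def MonoInc {n : ℕ} (k : ℕ) (σ : Equiv.Perm (Fin n)) : Prop :=
  ∀ a b : Fin n, k ≤ (a : ℕ) → a < b → σ a < σ b

namespace RPMProof

open Submodule Module Classical Finset

variable {K : Type*} [Field K] {m n : ℕ}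

/-- Truncation to the first `j` coordinates. -/
def trunc (K : Type*) [Field K] (n j : ℕ) : (Fin n → K) →ₗ[K] (Fin n → K) where
  toFun v b := if (b : ℕ) < j then v b else 0
  map_add' x y := by funext b; by_cases h : (b : ℕ) < j <;> simp [h]
  map_smul' c x := by funext b; by_cases h : (b : ℕ) < j <;> simp [h]

lemma trunc_apply (j : ℕ) (v : Fin n → K) (b : Fin n) :
    trunc K n j v b = if (b : ℕ) < j then v b else 0 := rfl

lemma trunc_trunc {j j' : ℕ} (h : j ≤ j') (v : Fin n → K) :
    trunc K n j (trunc K n j' v) = trunc K n j v := by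
  funext b
  simp only [trunc_apply]
  by_cases hb : (b : ℕ) < j
  · rw [if_pos hb, if_pos hb, if_pos (lt_of_lt_of_le hb h)]
  · rw [if_neg hb, if_neg hb]

lemma trunc_of_le {j : ℕ} (h : n ≤ j) (v : Fin n → K) : trunc K n j v = v := by
  funext b; simp [trunc_apply, lt_of_lt_of_le b.isLt h]

lemma trunc_zero (v : Fin n → K) : trunc K n 0 v = 0 := by
  funext b; simp [trunc_apply]

/-- Span of the first `i` rows of `A`, truncated to the first `j` columns. -/
noncomputable def Wsub (A : Matrix (Fin m) (Fin n) K) (i j : ℕ) : Submodule K (Fin n → K) :=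
  span K ((fun a : Fin m => trunc K n j (A a)) '' {a : Fin m | (a : ℕ) < i})

/-- Rank of the leading `i×j` submatrix, defined intrinsically. -/
noncomputable def rk (A : Matrix (Fin m) (Fin n) K) (i j : ℕ) : ℕ :=
  finrank K (Wsub A i j)

lemma Wsub_mono_left (A : Matrix (Fin m) (Fin n) K) {i i' : ℕ} (j : ℕ) (h : i ≤ i') :
    Wsub A i j ≤ Wsub A i' j :=
  span_mono (Set.image_mono fun a ha => lt_of_lt_of_le ha h)

lemma Wsub_map (A : Matrix (Fin m) (Fin n) K) (i : ℕ) {j j' : ℕ} (h : j ≤ j') :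
    (Wsub A i j').map (trunc K n j) = Wsub A i j := by
  rw [Wsub, Submodule.map_span, Set.image_image, Wsub]
  congr 1
  exact Set.image_congr fun a _ => trunc_trunc h _

lemma mem_of_mem_trunc (A : Matrix (Fin m) (Fin n) K) {i j j' : ℕ} (h : j ≤ j') {a : Fin m}
    (hm : trunc K n j' (A a) ∈ Wsub A i j') : trunc K n j (A a) ∈ Wsub A i j := by
  have := Submodule.mem_map_of_mem (f := trunc K n j) hm
  rw [Wsub_map A i h] at this
  rwa [trunc_trunc h] at this

lemma Wsub_succ (A : Matrix (Fin m) (Fin n) K) {i : ℕ} (hi : i < m) (j : ℕ) :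
    Wsub A (i+1) j = Wsub A i j ⊔ span K {trunc K n j (A ⟨i, hi⟩)} := by
  have hset : {a : Fin m | (a : ℕ) < i+1} = insert ⟨i, hi⟩ {a : Fin m | (a : ℕ) < i} := by
    ext a
    simp only [Set.mem_setOf_eq, Set.mem_insert_iff, Fin.ext_iff, Nat.lt_succ_iff_lt_or_eq]
    tauto
  rw [Wsub, hset, Set.image_insert_eq, span_insert, sup_comm]
  rfl

lemma Wsub_congr_set (A : Matrix (Fin m) (Fin n) K) {i i' : ℕ} (j : ℕ)
    (h : ∀ a : Fin m, (a : ℕ) < i ↔ (a : ℕ) < i') : Wsub A i j = Wsub A i' j := by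
  unfold Wsub
  have : {a : Fin m | (a : ℕ) < i} = {a : Fin m | (a : ℕ) < i'} := Set.ext fun a => h a
  rw [this]

lemma Wsub_succ_ge (A : Matrix (Fin m) (Fin n) K) {i : ℕ} (hi : m ≤ i) (j : ℕ) :
    Wsub A (i+1) j = Wsub A i j :=
  Wsub_congr_set A j fun a => by
    have := a.isLt; omega

lemma Wsub_col_ge (A : Matrix (Fin m) (Fin n) K) (i : ℕ) {j : ℕ} (hj : n ≤ j) :
    Wsub A i (j+1) = Wsub A i j := by
  unfold Wsub
  have : (fun a : Fin m => trunc K n (j+1) (A a)) '' {a : Fin m | (a : ℕ) < i}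
      = (fun a : Fin m => trunc K n j (A a)) '' {a : Fin m | (a : ℕ) < i} :=
    Set.image_congr fun a _ => by
      rw [trunc_of_le (le_trans hj (Nat.le_succ j)), trunc_of_le hj]
  rw [this]

lemma frk_congr {V : Type*} [AddCommGroup V] [Module K V] {p q : Submodule K V} (h : p = q) :
    finrank K p = finrank K q := by rw [h]

lemma rk_zero (A : Matrix (Fin m) (Fin n) K) (j : ℕ) : rk A 0 j = 0 := by
  have hW : Wsub A 0 j = ⊥ := by
    rw [Wsub, show {a : Fin m | (a : ℕ) < 0} = ∅ by simp, Set.image_empty, span_empty]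
  simp only [rk]
  rw [frk_congr hW]
  exact finrank_bot K _

lemma rk_succ_mem (A : Matrix (Fin m) (Fin n) K) {i : ℕ} (hi : i < m) {j : ℕ}
    (h : trunc K n j (A ⟨i, hi⟩) ∈ Wsub A i j) : rk A (i+1) j = rk A i j := by
  have hs : span K {trunc K n j (A ⟨i, hi⟩)} ≤ Wsub A i j :=
    span_le.mpr (Set.singleton_subset_iff.mpr h)
  exact frk_congr (by rw [Wsub_succ A hi, sup_eq_left.mpr hs])

lemma rk_succ_not_mem (A : Matrix (Fin m) (Fin n) K) {i : ℕ} (hi : i < m) {j : ℕ}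
    (h : trunc K n j (A ⟨i, hi⟩) ∉ Wsub A i j) : rk A (i+1) j = rk A i j + 1 := by
  have hvne : trunc K n j (A ⟨i, hi⟩) ≠ 0 := fun h0 => h (h0 ▸ zero_mem _)
  have hle : rk A (i+1) j ≤ rk A i j + 1 := by
    simp only [rk]
    rw [frk_congr (Wsub_succ A hi j)]
    have h2 := Submodule.finrank_sup_add_finrank_inf_eq (Wsub A i j)
      (span K {trunc K n j (A ⟨i, hi⟩)})
    rw [finrank_span_singleton hvne] at h2
    omega
  have hlt : rk A i j < rk A (i+1) j := by
    simp only [rk]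
    rw [frk_congr (Wsub_succ A hi j)]
    apply Submodule.finrank_lt_finrank_of_lt
    refine lt_of_le_of_ne le_sup_left fun he => h ?_
    rw [he]
    exact Submodule.mem_sup_right (Submodule.mem_span_singleton_self _)
  omega

lemma rk_succ_ge (A : Matrix (Fin m) (Fin n) K) {i : ℕ} (hi : m ≤ i) (j : ℕ) :
    rk A (i+1) j = rk A i j := by
  exact frk_congr (Wsub_succ_ge A hi j)

lemma rk_mono_left (A : Matrix (Fin m) (Fin n) K) {i i' : ℕ} (j : ℕ) (h : i ≤ i') :
    rk A i j ≤ rk A i' j :=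
  Submodule.finrank_mono (Wsub_mono_left A j h)

lemma rk_succ_le (A : Matrix (Fin m) (Fin n) K) (i j : ℕ) :
    rk A (i+1) j ≤ rk A i j + 1 := by
  rcases lt_or_ge i m with hi | hi
  · by_cases h : trunc K n j (A ⟨i, hi⟩) ∈ Wsub A i j
    · rw [rk_succ_mem A hi h]; omega
    · rw [rk_succ_not_mem A hi h]
  · rw [rk_succ_ge A hi]; omega

lemma rk_of_ge_row (A : Matrix (Fin m) (Fin n) K) {i : ℕ} (hi : m ≤ i) (j : ℕ) :
    rk A i j = rk A m j := by
  exact frk_congr (Wsub_congr_set A j fun a =>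
    ⟨fun _ => a.isLt, fun _ => lt_of_lt_of_le a.isLt hi⟩)

lemma rk_col_ge (A : Matrix (Fin m) (Fin n) K) (i : ℕ) {j : ℕ} (hj : n ≤ j) :
    rk A i (j+1) = rk A i j := by
  exact frk_congr (Wsub_col_ge A i hj)

/-- Zero-padding `Fin j → K` into `Fin n → K`. -/
def pad (K : Type*) [Field K] {n : ℕ} {j : ℕ} (hj : j ≤ n) : (Fin j → K) →ₗ[K] (Fin n → K) where
  toFun v b := if h : (b : ℕ) < j then v ⟨b, h⟩ else 0
  map_add' x y := by funext b; by_cases h : (b : ℕ) < j <;> simp [h]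
  map_smul' c x := by funext b; by_cases h : (b : ℕ) < j <;> simp [h]

lemma pad_injective {j : ℕ} (hj : j ≤ n) : Function.Injective (pad K hj) := by
  intro v w h
  funext b
  have := congrFun h (Fin.castLE hj b)
  simpa [pad, b.isLt] using this

lemma pad_row (A : Matrix (Fin m) (Fin n) K) {i j : ℕ} (hi : i ≤ m) (hj : j ≤ n) (a : Fin i) :
    pad K hj (leadSub A hi hj a) = trunc K n j (A (Fin.castLE hi a)) := by
  funext b
  by_cases h : (b : ℕ) < j
  · have : Fin.castLE hj ⟨(b : ℕ), h⟩ = b := Fin.ext rfl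
    simp [pad, trunc_apply, h, leadSub, this]
  · simp [pad, trunc_apply, h]

lemma rank_eq_finrank_span_rows {p q : ℕ} (M : Matrix (Fin p) (Fin q) K) :
    M.rank = finrank K (span K (Set.range M)) := by
  exact rank_eq_finrank_span_row M

lemma rank_leadSub_eq_rk (A : Matrix (Fin m) (Fin n) K) {i j : ℕ} (hi : i ≤ m) (hj : j ≤ n) :
    (leadSub A hi hj).rank = rk A i j := by
  rw [rank_eq_finrank_span_rows, rk,
    (Submodule.equivMapOfInjective _ (pad_injective hj) _).finrank_eq]
  apply frk_congr
  rw [Submodule.map_span]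
  congr 1
  erw [← Set.range_comp]
  ext x
  constructor
  · rintro ⟨a, rfl⟩
    exact ⟨Fin.castLE hi a, a.isLt, (pad_row A hi hj a).symm⟩
  · rintro ⟨a, ha, rfl⟩
    refine ⟨⟨(a : ℕ), ha⟩, ?_⟩
    have hca : Fin.castLE hi ⟨(a : ℕ), ha⟩ = a := Fin.ext rfl
    exact (pad_row A hi hj _).trans (by rw [hca])

lemma leadSub_transpose (A : Matrix (Fin m) (Fin n) K) {i j : ℕ} (hi : i ≤ m) (hj : j ≤ n) :
    leadSub Aᵀ hj hi = (leadSub A hi hj)ᵀ := by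
  rw [leadSub, leadSub, transpose_submatrix]

lemma rk_transpose (A : Matrix (Fin m) (Fin n) K) {i j : ℕ} (hi : i ≤ m) (hj : j ≤ n) :
    rk Aᵀ j i = rk A i j := by
  rw [← rank_leadSub_eq_rk Aᵀ hj hi, ← rank_leadSub_eq_rk A hi hj, leadSub_transpose A hi hj,
    rank_transpose]

lemma rk_col_succ_le (A : Matrix (Fin m) (Fin n) K) (i j : ℕ) :
    rk A i (j+1) ≤ rk A i j + 1 := by
  rcases le_or_gt n j with hj | hj
  · rw [rk_col_ge A i hj]; omega
  · rcases le_or_gt i m with hi | hi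
    · rw [← rk_transpose A hi (Nat.succ_le_of_lt hj), ← rk_transpose A hi (le_of_lt hj)]
      exact rk_succ_le Aᵀ j i
    · rw [rk_of_ge_row A (le_of_lt hi) (j+1), rk_of_ge_row A (le_of_lt hi) j,
        ← rk_transpose A le_rfl (Nat.succ_le_of_lt hj), ← rk_transpose A le_rfl (le_of_lt hj)]
      exact rk_succ_le Aᵀ j m

lemma rk_col_succ_mono (A : Matrix (Fin m) (Fin n) K) (i j : ℕ) :
    rk A i j ≤ rk A i (j+1) := by
  rcases le_or_gt n j with hj | hj
  · rw [rk_col_ge A i hj]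
  · rcases le_or_gt i m with hi | hi
    · rw [← rk_transpose A hi (Nat.succ_le_of_lt hj), ← rk_transpose A hi (le_of_lt hj)]
      exact rk_mono_left Aᵀ i (Nat.le_succ j)
    · rw [rk_of_ge_row A (le_of_lt hi) (j+1), rk_of_ge_row A (le_of_lt hi) j,
        ← rk_transpose A le_rfl (Nat.succ_le_of_lt hj), ← rk_transpose A le_rfl (le_of_lt hj)]
      exact rk_mono_left Aᵀ m (Nat.le_succ j)

lemma rk_col_mono (A : Matrix (Fin m) (Fin n) K) (i : ℕ) {j j' : ℕ} (h : j ≤ j') :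
    rk A i j ≤ rk A i j' := by
  induction j' with
  | zero => rw [Nat.le_zero.mp h]
  | succ j' ih =>
    rcases Nat.le_succ_iff.mp h with h' | h'
    · exact le_trans (ih h') (rk_col_succ_mono A i j')
    · rw [h']

/-- `(i,j)` is a pivot position of `A`. -/
def Piv (A : Matrix (Fin m) (Fin n) K) (i j : ℕ) : Prop :=
  rk A (i+1) (j+1) = rk A i j + 1 ∧ rk A (i+1) j = rk A i j ∧ rk A i (j+1) = rk A i j

lemma piv_lt {A : Matrix (Fin m) (Fin n) K} {i j : ℕ} (h : Piv A i j) : i < m ∧ j < n := by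
  obtain ⟨h1, h2, h3⟩ := h
  constructor
  · by_contra hi
    rw [rk_succ_ge A (le_of_not_gt hi) (j+1)] at h1
    omega
  · by_contra hj
    rw [rk_col_ge A (i+1) (le_of_not_gt hj)] at h1
    omega

lemma piv_iff {A : Matrix (Fin m) (Fin n) K} {i : ℕ} (hi : i < m) (j : ℕ) :
    Piv A i j ↔ (trunc K n (j+1) (A ⟨i, hi⟩) ∉ Wsub A i (j+1) ∧
      trunc K n j (A ⟨i, hi⟩) ∈ Wsub A i j) := by
  constructor
  · rintro ⟨h1, h2, h3⟩
    constructor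
    · intro hmem
      rw [rk_succ_mem A hi hmem] at h1
      omega
    · by_contra hmem
      rw [rk_succ_not_mem A hi hmem] at h2
      omega
  · rintro ⟨hnot, hmem⟩
    have h2 := rk_succ_mem A hi hmem
    have h1' := rk_succ_not_mem A hi hnot
    have hb1 := rk_col_succ_le A (i+1) j
    have hb2 := rk_col_mono A i (Nat.le_add_right j 1)
    exact ⟨by omega, h2, by omega⟩

lemma piv_row_unique {A : Matrix (Fin m) (Fin n) K} {i j j' : ℕ}
    (h : Piv A i j) (h' : Piv A i j') : j = j' := by
  have hi : i < m := (piv_lt h).1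
  by_contra hne
  wlog hlt : j < j' generalizing j j'
  · exact this h' h (Ne.symm hne) (by omega)
  have hq := ((piv_iff hi j).mp h).1
  have hq' := ((piv_iff hi j').mp h').2
  exact hq (mem_of_mem_trunc A (Nat.succ_le_of_lt hlt) hq')

lemma piv_transpose {A : Matrix (Fin m) (Fin n) K} {i j : ℕ} (hi : i < m) (hj : j < n) :
    Piv A i j ↔ Piv Aᵀ j i := by
  unfold Piv
  rw [rk_transpose A (Nat.succ_le_of_lt hi) (Nat.succ_le_of_lt hj),
    rk_transpose A (le_of_lt hi) (Nat.succ_le_of_lt hj),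
    rk_transpose A (Nat.succ_le_of_lt hi) (le_of_lt hj),
    rk_transpose A (le_of_lt hi) (le_of_lt hj)]
  tauto

lemma piv_col_unique {A : Matrix (Fin m) (Fin n) K} {i i' j : ℕ}
    (h : Piv A i j) (h' : Piv A i' j) : i = i' := by
  have hl := piv_lt h
  have hl' := piv_lt h'
  exact piv_row_unique ((piv_transpose hl.1 hl.2).mp h) ((piv_transpose hl'.1 hl'.2).mp h')

lemma exists_piv {A : Matrix (Fin m) (Fin n) K} {i : ℕ} (hi : i < m) :
    ∀ j : ℕ, trunc K n j (A ⟨i, hi⟩) ∉ Wsub A i j → ∃ b, b < j ∧ Piv A i b := by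
  intro j
  induction j with
  | zero =>
    intro h
    exact absurd (by rw [trunc_zero]; exact zero_mem _) h
  | succ j ih =>
    intro h
    by_cases hm : trunc K n j (A ⟨i, hi⟩) ∈ Wsub A i j
    · exact ⟨j, Nat.lt_succ_self j, (piv_iff hi j).mpr ⟨h, hm⟩⟩
    · obtain ⟨b, hb, hp⟩ := ih hm
      exact ⟨b, Nat.lt_succ_of_lt hb, hp⟩

lemma piv_notmem {A : Matrix (Fin m) (Fin n) K} {i b j : ℕ} (hi : i < m)
    (hb : Piv A i b) (hbj : b < j) : trunc K n j (A ⟨i, hi⟩) ∉ Wsub A i j :=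
  fun hmem => ((piv_iff hi b).mp hb).1 (mem_of_mem_trunc A (Nat.succ_le_of_lt hbj) hmem)

noncomputable def rowcnt (M : Matrix (Fin m) (Fin n) K) (a : Fin m) (j : ℕ) : ℕ :=
  (Finset.univ.filter fun b : Fin n => M a b ≠ 0 ∧ (b : ℕ) < j).card

noncomputable def cntM (M : Matrix (Fin m) (Fin n) K) (i j : ℕ) : ℕ :=
  (Finset.univ.filter fun pr : Fin m × Fin n =>
    M pr.1 pr.2 ≠ 0 ∧ (pr.1 : ℕ) < i ∧ (pr.2 : ℕ) < j).card

lemma cnt_fiber (M : Matrix (Fin m) (Fin n) K) (i j : ℕ) :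
    cntM M i j = ∑ a : Fin m, if (a : ℕ) < i then rowcnt M a j else 0 := by
  rw [cntM, Finset.card_eq_sum_card_fiberwise (f := Prod.fst) (t := Finset.univ)
    (fun x _ => Finset.mem_univ _)]
  refine Finset.sum_congr rfl fun a _ => ?_
  by_cases ha : (a : ℕ) < i
  · rw [if_pos ha, rowcnt]
    refine Finset.card_bij (fun pr _ => pr.2) ?_ ?_ ?_
    · intro pr hp
      simp only [Finset.mem_filter, Finset.mem_univ, true_and] at hp ⊢
      obtain ⟨⟨h1, _, h3⟩, h4⟩ := hp
      rw [← h4]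
      exact ⟨h1, h3⟩
    · intro pr hp pr' hp' he
      simp only [Finset.mem_filter] at hp hp'
      exact Prod.ext (hp.2.trans hp'.2.symm) he
    · intro b hb
      simp only [Finset.mem_filter, Finset.mem_univ, true_and] at hb
      exact ⟨(a, b), Finset.mem_filter.mpr
        ⟨Finset.mem_filter.mpr ⟨Finset.mem_univ _, ⟨hb.1, ha, hb.2⟩⟩, rfl⟩, rfl⟩
  · rw [if_neg ha, Finset.card_eq_zero, Finset.filter_eq_empty_iff]
    intro pr hp
    simp only [Finset.mem_filter, Finset.mem_univ, true_and] at hp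
    intro hpa
    exact ha (hpa ▸ hp.2.1)

lemma cnt_zero (M : Matrix (Fin m) (Fin n) K) (j : ℕ) : cntM M 0 j = 0 := by
  rw [cnt_fiber]
  simp

lemma cnt_succ (M : Matrix (Fin m) (Fin n) K) {i : ℕ} (hi : i < m) (j : ℕ) :
    cntM M (i+1) j = cntM M i j + rowcnt M ⟨i, hi⟩ j := by
  rw [cnt_fiber, cnt_fiber]
  have key : ∀ a : Fin m, (if (a : ℕ) < i+1 then rowcnt M a j else 0)
      = (if (a : ℕ) < i then rowcnt M a j else 0)
        + (if a = ⟨i, hi⟩ then rowcnt M a j else 0) := by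
    intro a
    by_cases h1 : (a : ℕ) < i
    · have h2 : a ≠ ⟨i, hi⟩ := by
        intro he
        rw [he] at h1
        simp at h1
      rw [if_pos (by omega), if_pos h1, if_neg h2, Nat.add_zero]
    · by_cases h2 : a = ⟨i, hi⟩
      · rw [if_pos (by rw [h2]; exact Nat.lt_succ_self i), if_neg h1, if_pos h2, Nat.zero_add]
      · have h3 : ¬ (a : ℕ) < i + 1 := by
          intro hl
          rcases Nat.lt_succ_iff_lt_or_eq.mp hl with h | h
          · exact h1 h
          · exact h2 (Fin.ext h)
        rw [if_neg h3, if_neg h1, if_neg h2]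
  rw [Finset.sum_congr rfl (fun a _ => key a), Finset.sum_add_distrib,
    Finset.sum_ite_eq' Finset.univ (⟨i, hi⟩ : Fin m) (fun a => rowcnt M a j),
    if_pos (Finset.mem_univ _)]

lemma rowcnt_succ (M : Matrix (Fin m) (Fin n) K) (a : Fin m) {j : ℕ} (hj : j < n) :
    rowcnt M a (j+1) = rowcnt M a j + if M a ⟨j, hj⟩ ≠ 0 then 1 else 0 := by
  rw [rowcnt, rowcnt]
  have hsplit : (Finset.univ.filter fun b : Fin n => M a b ≠ 0 ∧ (b : ℕ) < j+1)
      = (Finset.univ.filter fun b : Fin n => M a b ≠ 0 ∧ (b : ℕ) < j)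
        ∪ (Finset.univ.filter fun b : Fin n => M a b ≠ 0 ∧ (b : ℕ) = j) := by
    ext b
    simp only [Finset.mem_filter, Finset.mem_union, Finset.mem_univ, true_and]
    constructor
    · rintro ⟨h1, h2⟩
      rcases Nat.lt_succ_iff_lt_or_eq.mp h2 with h | h
      · exact Or.inl ⟨h1, h⟩
      · exact Or.inr ⟨h1, h⟩
    · rintro (⟨h1, h2⟩ | ⟨h1, h2⟩)
      · exact ⟨h1, by omega⟩
      · exact ⟨h1, by omega⟩
  have hdisj : Disjoint (Finset.univ.filter fun b : Fin n => M a b ≠ 0 ∧ (b : ℕ) < j)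
      (Finset.univ.filter fun b : Fin n => M a b ≠ 0 ∧ (b : ℕ) = j) := by
    rw [Finset.disjoint_left]
    intro b hb hb'
    simp only [Finset.mem_filter, Finset.mem_univ, true_and] at hb hb'
    omega
  rw [hsplit, Finset.card_union_of_disjoint hdisj]
  congr 1
  by_cases hz : M a ⟨j, hj⟩ ≠ 0
  · rw [if_pos hz, Finset.card_eq_one]
    refine ⟨⟨j, hj⟩, ?_⟩
    ext b
    simp only [Finset.mem_filter, Finset.mem_univ, true_and, Finset.mem_singleton]
    constructor
    · rintro ⟨_, h2⟩
      exact Fin.ext h2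
    · rintro rfl
      exact ⟨hz, rfl⟩
  · rw [if_neg hz, Finset.card_eq_zero, Finset.filter_eq_empty_iff]
    rintro b - ⟨h1, h2⟩
    exact hz (by rwa [show (⟨j, hj⟩ : Fin n) = b from Fin.ext h2.symm])

lemma subperm_rank {p q : ℕ} (M : Matrix (Fin p) (Fin q) K)
    (h01 : ∀ a b, M a b = 0 ∨ M a b = 1)
    (hrow : ∀ a b b', M a b ≠ 0 → M a b' ≠ 0 → b = b')
    (hcol : ∀ a a' b, M a b ≠ 0 → M a' b ≠ 0 → a = a') :
    M.rank = (Finset.univ.filter fun pr : Fin p × Fin q => M pr.1 pr.2 ≠ 0).card := by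
  classical
  set s : Finset (Fin p) := Finset.univ.filter (fun a => ∃ b, M a b ≠ 0) with hs
  have hc : ∀ a : Fin p, a ∈ s → ∃ b, M a b ≠ 0 := fun a ha => by
    simpa [hs] using (Finset.mem_filter.mp ha).2
  choose c hcspec using fun (a : {x // x ∈ s}) => hc a a.2
  have hrow_eq : ∀ a : {x // x ∈ s}, M (a : Fin p) = Pi.single (c a) 1 := by
    intro a
    funext b
    by_cases hb : b = c a
    · rw [hb]
      rcases h01 (a : Fin p) (c a) with h | h
      · exact absurd h (hcspec a)
      · rw [h, Pi.single_eq_same]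
    · have hz : M (a : Fin p) b = 0 := by
        by_contra hnz
        exact hb (hrow a b (c a) hnz (hcspec a))
      rw [hz, Pi.single_eq_of_ne hb]
  have hcinj : Function.Injective c := fun a a' he =>
    Subtype.ext (hcol a a' (c a) (hcspec a) (he ▸ hcspec a'))
  have hli : LinearIndependent K (fun a : {x // x ∈ s} => M (a : Fin p)) := by
    have heq : (fun a : {x // x ∈ s} => M (a : Fin p)) = (⇑(Pi.basisFun K (Fin q)) ∘ c) := by
      funext a
      rw [hrow_eq a, Function.comp_apply, Pi.basisFun_apply]
    rw [heq]
    exact (Pi.basisFun K (Fin q)).linearIndependent.comp c hcinj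
  have hspan : span K (Set.range (fun a : {x // x ∈ s} => M (a : Fin p)))
      = span K (Set.range M) := by
    apply le_antisymm
    · apply span_mono
      rintro x ⟨a, rfl⟩
      exact ⟨a, rfl⟩
    · rw [span_le]
      rintro x ⟨a, rfl⟩
      by_cases ha : a ∈ s
      · exact subset_span ⟨⟨a, ha⟩, rfl⟩
      · have hz : M a = 0 := by
          funext b
          rw [Pi.zero_apply]
          by_contra hb
          refine ha ?_
          simp only [hs, Finset.mem_filter, Finset.mem_univ, true_and]
          exact ⟨b, hb⟩
        rw [hz]
        simp only [SetLike.mem_coe]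
        exact zero_mem _
  rw [rank_eq_finrank_span_rows, ← hspan, finrank_span_eq_card hli, Fintype.card_coe]
  refine Finset.card_bij (fun a ha => ((a : Fin p), c ⟨a, ha⟩)) ?_ ?_ ?_
  · intro a ha
    simp only [Finset.mem_filter, Finset.mem_univ, true_and]
    exact hcspec ⟨a, ha⟩
  · intro a ha a' ha' he
    exact congrArg Prod.fst he
  · intro pr hpr
    simp only [Finset.mem_filter, Finset.mem_univ, true_and] at hpr
    have hmem : pr.1 ∈ s := by
      simp only [hs, Finset.mem_filter, Finset.mem_univ, true_and]
      exact ⟨pr.2, hpr⟩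
    refine ⟨pr.1, hmem, ?_⟩
    have hcp : c ⟨pr.1, hmem⟩ = pr.2 := hrow pr.1 _ _ (hcspec ⟨pr.1, hmem⟩) hpr
    show (pr.1, c ⟨pr.1, hmem⟩) = pr
    rw [hcp]

lemma rank_leadSub_eq_cnt (M : Matrix (Fin m) (Fin n) K)
    (h01 : ∀ a b, M a b = 0 ∨ M a b = 1)
    (hrow : ∀ a b b', M a b ≠ 0 → M a b' ≠ 0 → b = b')
    (hcol : ∀ a a' b, M a b ≠ 0 → M a' b ≠ 0 → a = a')
    {i j : ℕ} (hi : i ≤ m) (hj : j ≤ n) :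
    (leadSub M hi hj).rank = cntM M i j := by
  rw [subperm_rank (leadSub M hi hj)
    (fun a b => h01 _ _)
    (fun a b b' h h' => Fin.castLE_injective hj (hrow _ _ _ h h'))
    (fun a a' b h h' => Fin.castLE_injective hi (hcol _ _ _ h h')), cntM]
  refine Finset.card_bij (fun pr _ => (Fin.castLE hi pr.1, Fin.castLE hj pr.2)) ?_ ?_ ?_
  · intro pr hpr
    simp only [Finset.mem_filter, Finset.mem_univ, true_and] at hpr ⊢
    exact ⟨hpr, pr.1.isLt, pr.2.isLt⟩
  · intro pr h1 pr' h2 he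
    exact Prod.ext (Fin.castLE_injective hi (congrArg Prod.fst he))
      (Fin.castLE_injective hj (congrArg Prod.snd he))
  · intro pr hpr
    simp only [Finset.mem_filter, Finset.mem_univ, true_and] at hpr
    obtain ⟨hne, h1, h2⟩ := hpr
    refine ⟨(⟨(pr.1 : ℕ), h1⟩, ⟨(pr.2 : ℕ), h2⟩), ?_, ?_⟩
    · simp only [Finset.mem_filter, Finset.mem_univ, true_and]
      exact hne
    · exact Prod.ext (Fin.ext rfl) (Fin.ext rfl)

/-- The candidate rank profile matrix. -/
noncomputable def Rmat (A : Matrix (Fin m) (Fin n) K) : Matrix (Fin m) (Fin n) K :=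
  Matrix.of fun (a : Fin m) (b : Fin n) => if Piv A (a : ℕ) (b : ℕ) then (1 : K) else 0

lemma Rmat_ne (A : Matrix (Fin m) (Fin n) K) (a : Fin m) (b : Fin n) :
    Rmat A a b ≠ 0 ↔ Piv A (a : ℕ) (b : ℕ) := by
  unfold Rmat
  by_cases h : Piv A (a : ℕ) (b : ℕ) <;> simp [h]

lemma Rmat_01 (A : Matrix (Fin m) (Fin n) K) :
    ∀ a b, Rmat A a b = 0 ∨ Rmat A a b = 1 := by
  intro a b
  unfold Rmat
  by_cases h : Piv A (a : ℕ) (b : ℕ) <;> simp [h]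

lemma Rmat_row (A : Matrix (Fin m) (Fin n) K) :
    ∀ a b b', Rmat A a b ≠ 0 → Rmat A a b' ≠ 0 → b = b' := fun a b b' h h' =>
  Fin.ext (piv_row_unique ((Rmat_ne A a b).mp h) ((Rmat_ne A a b').mp h'))

lemma Rmat_col (A : Matrix (Fin m) (Fin n) K) :
    ∀ a a' b, Rmat A a b ≠ 0 → Rmat A a' b ≠ 0 → a = a' := fun a a' b h h' =>
  Fin.ext (piv_col_unique ((Rmat_ne A a b).mp h) ((Rmat_ne A a' b).mp h'))

lemma cnt_eq_rk (A : Matrix (Fin m) (Fin n) K) :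
    ∀ i, i ≤ m → ∀ j, j ≤ n → cntM (Rmat A) i j = rk A i j := by
  intro i
  induction i with
  | zero => intro _ j _; rw [cnt_zero, rk_zero]
  | succ i ih =>
    intro hi1 j hj
    have hi : i < m := hi1
    rw [cnt_succ (Rmat A) hi j, ih (le_of_lt hi) j hj]
    by_cases hm : trunc K n j (A ⟨i, hi⟩) ∈ Wsub A i j
    · rw [rk_succ_mem A hi hm]
      have hz : rowcnt (Rmat A) ⟨i, hi⟩ j = 0 := by
        rw [rowcnt, Finset.card_eq_zero, Finset.filter_eq_empty_iff]
        rintro b - ⟨h1, h2⟩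
        have hpiv : Piv A i (b : ℕ) := (Rmat_ne A ⟨i, hi⟩ b).mp h1
        exact piv_notmem hi hpiv h2 hm
      rw [hz, Nat.add_zero]
    · rw [rk_succ_not_mem A hi hm]
      obtain ⟨b0, hb0, hp0⟩ := exists_piv hi j hm
      have hb0n : b0 < n := (piv_lt hp0).2
      have ho : rowcnt (Rmat A) ⟨i, hi⟩ j = 1 := by
        rw [rowcnt, Finset.card_eq_one]
        refine ⟨⟨b0, hb0n⟩, ?_⟩
        ext b
        simp only [Finset.mem_filter, Finset.mem_univ, true_and, Finset.mem_singleton]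
        constructor
        · rintro ⟨h1, _⟩
          exact Fin.ext (piv_row_unique ((Rmat_ne A _ _).mp h1) hp0)
        · rintro rfl
          exact ⟨(Rmat_ne A _ _).mpr hp0, hb0⟩
      rw [ho]

lemma cntM_step (M : Matrix (Fin m) (Fin n) K) (a : Fin m) (b : Fin n) :
    cntM M ((a : ℕ)+1) ((b : ℕ)+1) + cntM M (a : ℕ) (b : ℕ)
      = cntM M ((a : ℕ)+1) (b : ℕ) + cntM M (a : ℕ) ((b : ℕ)+1)
        + (if M a b ≠ 0 then 1 else 0) := by
  have ha : (a : ℕ) < m := a.isLt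
  have hb : (b : ℕ) < n := b.isLt
  have he : (⟨(a : ℕ), ha⟩ : Fin m) = a := Fin.ext rfl
  have he2 : (⟨(b : ℕ), hb⟩ : Fin n) = b := Fin.ext rfl
  have h1 := cnt_succ M ha ((b : ℕ)+1)
  have h2 := cnt_succ M ha (b : ℕ)
  have h3 := rowcnt_succ M (⟨(a : ℕ), ha⟩ : Fin m) hb
  rw [he] at h1 h2 h3
  rw [he2] at h3
  by_cases hz : M a b ≠ 0
  · rw [if_pos hz] at h3 ⊢
    omega
  · rw [if_neg hz] at h3 ⊢
    omega

lemma cnt_full (M : Matrix (Fin m) (Fin n) K) :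
    (Finset.univ.filter fun pr : Fin m × Fin n => M pr.1 pr.2 ≠ 0).card = cntM M m n := by
  rw [cntM]
  congr 1
  apply Finset.filter_congr
  intro pr _
  simp [pr.1.isLt, pr.2.isLt]

lemma leadSub_self (A : Matrix (Fin m) (Fin n) K) : leadSub A (le_refl m) (le_refl n) = A := rfl

lemma rank_eq_rk_full (A : Matrix (Fin m) (Fin n) K) : A.rank = rk A m n := by
  rw [← rank_leadSub_eq_rk A (le_refl m) (le_refl n), leadSub_self]

end RPMProof

open RPMProof in
/-- existence and uniqueness of the rank profile matrix. -/
theorem stmt0 {K : Type*} [Field K] {m n : ℕ} (A : Matrix (Fin m) (Fin n) K) :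
    ∃! R : Matrix (Fin m) (Fin n) K,
      (∀ i j, R i j = 0 ∨ R i j = 1) ∧
      {p : Fin m × Fin n | R p.1 p.2 ≠ 0}.ncard = A.rank ∧
      (∀ i j j', R i j ≠ 0 → R i j' ≠ 0 → j = j') ∧
      (∀ i i' j, R i j ≠ 0 → R i' j ≠ 0 → i = i') ∧
      ∀ (i j : ℕ) (hi : i ≤ m) (hj : j ≤ n),
        (leadSub R hi hj).rank = (leadSub A hi hj).rank := by
  classical
  have hrank : ∀ (i j : ℕ) (hi : i ≤ m) (hj : j ≤ n),
      (leadSub (Rmat A) hi hj).rank = (leadSub A hi hj).rank := by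
    intro i j hi hj
    rw [rank_leadSub_eq_cnt (Rmat A) (Rmat_01 A) (Rmat_row A) (Rmat_col A) hi hj,
      cnt_eq_rk A i hi j hj, rank_leadSub_eq_rk A hi hj]
  have hcard : {p : Fin m × Fin n | Rmat A p.1 p.2 ≠ 0}.ncard = A.rank := by
    have hset : {p : Fin m × Fin n | Rmat A p.1 p.2 ≠ 0}
        = ↑(Finset.univ.filter fun pr : Fin m × Fin n => Rmat A pr.1 pr.2 ≠ 0) := by
      ext p
      simp
    rw [hset, Set.ncard_coe_finset, cnt_full, cnt_eq_rk A m le_rfl n le_rfl, ← rank_eq_rk_full]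
  refine ⟨Rmat A, ⟨Rmat_01 A, hcard, Rmat_row A, Rmat_col A, hrank⟩, ?_⟩
  rintro R' ⟨h01', hcard', hrow', hcol', hrank'⟩
  have hcnt : ∀ i, i ≤ m → ∀ j, j ≤ n → cntM R' i j = cntM (Rmat A) i j := by
    intro i hi j hj
    rw [← rank_leadSub_eq_cnt R' h01' hrow' hcol' hi hj, hrank' i j hi hj,
      rank_leadSub_eq_rk A hi hj, ← cnt_eq_rk A i hi j hj]
  ext a b
  have h1 := cntM_step R' a b
  have h2 := cntM_step (Rmat A) a b
  have e1 := hcnt ((a : ℕ)+1) a.isLt ((b : ℕ)+1) b.isLt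
  have e2 := hcnt (a : ℕ) (le_of_lt a.isLt) (b : ℕ) (le_of_lt b.isLt)
  have e3 := hcnt ((a : ℕ)+1) a.isLt (b : ℕ) (le_of_lt b.isLt)
  have e4 := hcnt (a : ℕ) (le_of_lt a.isLt) ((b : ℕ)+1) b.isLt
  rw [e1, e2, e3, e4] at h1
  have hiff : R' a b ≠ 0 ↔ Rmat A a b ≠ 0 := by
    constructor
    · intro h
      by_contra hy
      rw [if_pos h] at h1
      rw [if_neg (not_not_intro hy)] at h2
      omega
    · intro h
      by_contra hx
      rw [if_neg (not_not_intro hx)] at h1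
      rw [if_pos h] at h2
      omega
  rcases h01' a b with h | h
  · have hz : Rmat A a b = 0 := not_not.mp fun hy => (hiff.mpr hy) h
    rw [h, hz]
  · have hy : Rmat A a b ≠ 0 := hiff.mp (by rw [h]; exact one_ne_zero)
    have h1' : Rmat A a b = 1 := (Rmat_01 A a b).resolve_left hy
    rw [h, h1']
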